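/- Let w_1, …, w_m ∈ ℝ^N span a linear subspace W of dimension k, and let I ⊆ [m] with |I| = k be a subset maximizing the k-dimensional volume vol({w_i : i ∈ I}) (the square root of the Gram determinant det(⟨w_i, w_j⟩)_{i,j∈I}) among all k-element subsets, and suppose this maximal volume is strictly positive. Then {w_i : i ∈ I} is a basis of W, and for every ℓ ∈ [m], the unique coefficients λ ∈ ℝ^I with w_ℓ = ∑_{i∈I} λ_i w_i satisfy |λ_i| ≤ 1 for all i ∈ I. -/

import Mathlib

open Matrix

lemma gram_eq_mul_transpose {ι : Type*} [Fintype ι] {N : ℕ} (v : ι → Fin N → ℝ) :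
    (Matrix.of fun a b : ι => v a ⬝ᵥ v b) = Matrix.of v * (Matrix.of v)ᵀ := by
  ext a b
  simp [Matrix.mul_apply, dotProduct]

lemma det_update_one_row {ι : Type*} [Fintype ι] [DecidableEq ι] (i₀ : ι) (c : ι → ℝ) :
    ((1 : Matrix ι ι ℝ).updateRow i₀ c).det = c i₀ := by
  have h : (1 : Matrix ι ι ℝ).updateRow i₀ c = ((1 : Matrix ι ι ℝ).updateCol i₀ c)ᵀ := by
    rw [← Matrix.updateRow_transpose, Matrix.transpose_one]
  rw [h, Matrix.det_transpose, ← Matrix.cramer_apply, Matrix.cramer_one]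
  rfl

lemma gram_det_update {ι : Type*} [Fintype ι] [DecidableEq ι] {N : ℕ}
    (v : ι → Fin N → ℝ) (i₀ : ι) (c : ι → ℝ) :
    (Matrix.of fun a b : ι => (Function.update v i₀ (∑ j, c j • v j)) a ⬝ᵥ
        (Function.update v i₀ (∑ j, c j • v j)) b).det
      = (c i₀)^2 * (Matrix.of fun a b : ι => v a ⬝ᵥ v b).det := by
  set v' := Function.update v i₀ (∑ j, c j • v j) with hv'
  set E := (1 : Matrix ι ι ℝ).updateRow i₀ c with hE
  have hEA : Matrix.of v' = E * Matrix.of v := by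
    ext a x
    by_cases h : a = i₀
    · subst h
      simp [hv', hE, Matrix.mul_apply, Matrix.updateRow_self, Finset.sum_apply, mul_comm]
    · simp [hv', hE, Matrix.mul_apply, Matrix.updateRow_ne h, Function.update_of_ne h,
        Matrix.one_apply, ite_mul, Finset.sum_ite_eq]
  rw [gram_eq_mul_transpose, gram_eq_mul_transpose, hEA]
  rw [Matrix.transpose_mul, show E * Matrix.of v * ((Matrix.of v)ᵀ * Eᵀ)
      = E * (Matrix.of v * (Matrix.of v)ᵀ) * Eᵀ by simp [Matrix.mul_assoc]]
  rw [Matrix.det_mul, Matrix.det_mul, Matrix.det_transpose, det_update_one_row]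
  ring

/-- If `I` is a `k`-subset of indices maximizing the `k`-dimensional volume (square root
of the Gram determinant) among `k`-subsets of `w_1, …, w_m`, where `k` is the dimension
of the span `W` of the `w`'s, and this maximal volume is positive, then `{w_i : i ∈ I}`
is a basis of `W` and the coefficients expressing any `w_ℓ` in this basis are at most `1`
in absolute value. -/
theorem stmt12 {m N k : ℕ} (w : Fin m → (Fin N → ℝ))
    (hk : Module.finrank ℝ (Submodule.span ℝ (Set.range w)) = k)
    (I : Finset (Fin m)) (hI : I.card = k)
    (hmax : ∀ J : Finset (Fin m), J.card = k →
      Real.sqrt (Matrix.det (Matrix.of fun i j : ↥J => w i ⬝ᵥ w j)) ≤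
        Real.sqrt (Matrix.det (Matrix.of fun i j : ↥I => w i ⬝ᵥ w j)))
    (hpos : 0 < Real.sqrt (Matrix.det (Matrix.of fun i j : ↥I => w i ⬝ᵥ w j))) :
    LinearIndependent ℝ (fun i : ↥I => w i) ∧
    Submodule.span ℝ (w '' ↑I) = Submodule.span ℝ (Set.range w) ∧
    ∀ (ℓ : Fin m) (lam : ↥I → ℝ), w ℓ = ∑ i, lam i • w i → ∀ i, |lam i| ≤ 1 := by
  have hGpos : 0 < (Matrix.of fun i j : ↥I => w i ⬝ᵥ w j).det := by
    by_contra h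
    push_neg at h
    rw [Real.sqrt_eq_zero'.mpr h] at hpos
    exact lt_irrefl 0 hpos
  have hdet : (Matrix.of fun i j : ↥I => w i ⬝ᵥ w j).det ≠ 0 := ne_of_gt hGpos
  -- linear independence
  have li : LinearIndependent ℝ (fun i : ↥I => w i) := by
    rw [Fintype.linearIndependent_iff]
    intro g hg
    have hmv : (Matrix.of fun i j : ↥I => w i ⬝ᵥ w j).mulVec g = 0 := by
      funext a
      have h1 : (w a : Fin N → ℝ) ⬝ᵥ (∑ b : ↥I, g b • w b) = 0 := by
        rw [hg]; exact dotProduct_zero _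
      calc (Matrix.of fun i j : ↥I => w i ⬝ᵥ w j).mulVec g a
          = ∑ b : ↥I, ∑ x, w a x * w b x * g b := by
            simp [Matrix.mulVec, dotProduct, Finset.sum_mul]
        _ = ∑ x, ∑ b : ↥I, w a x * w b x * g b := Finset.sum_comm
        _ = (w a : Fin N → ℝ) ⬝ᵥ (∑ b : ↥I, g b • w b) := by
            simp only [dotProduct, Finset.sum_apply, Pi.smul_apply, smul_eq_mul,
              Finset.mul_sum]
            exact Finset.sum_congr rfl fun x _ => Finset.sum_congr rfl fun b _ => by ring
        _ = 0 := h1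
    have := Matrix.eq_zero_of_mulVec_eq_zero hdet hmv
    exact fun i => congrFun this i
  refine ⟨li, ?_, ?_⟩
  · -- span equality
    have hfin : FiniteDimensional ℝ (Submodule.span ℝ (Set.range w)) :=
      FiniteDimensional.span_of_finite ℝ (Set.finite_range w)
    have hle : Submodule.span ℝ (w '' ↑I) ≤ Submodule.span ℝ (Set.range w) :=
      Submodule.span_mono (Set.image_subset_range w _)
    have hspan : Submodule.span ℝ (w '' ↑I)
        = Submodule.span ℝ (Set.range fun i : ↥I => w i) := by
      congr 1
      ext x
      constructor
      · rintro ⟨i, hi, rfl⟩; exact ⟨⟨i, hi⟩, rfl⟩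
      · rintro ⟨⟨i, hi⟩, rfl⟩; exact ⟨i, hi, rfl⟩
    have hfr : Module.finrank ℝ (Submodule.span ℝ (w '' ↑I)) = k := by
      rw [hspan, finrank_span_eq_card li, Fintype.card_coe, hI]
    exact Submodule.eq_of_le_of_finrank_le hle (by rw [hk, hfr])
  · -- coefficient bounds
    intro ℓ lam hsum i₀
    by_cases hℓ : ℓ ∈ I
    · -- ℓ ∈ I : coefficients are 0/1 by uniqueness
      set δ : ↥I → ℝ := fun i => if i = ⟨ℓ, hℓ⟩ then 1 else 0 with hδdef
      have hδ : ∑ i, δ i • w i = w ℓ := by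
        simp [hδdef, ite_smul]
      have hz : ∀ i, (lam - δ) i = 0 := by
        apply Fintype.linearIndependent_iff.mp li
        simp only [Pi.sub_apply, sub_smul, Finset.sum_sub_distrib, ← hsum, hδ, sub_self]
      have h0 := hz i₀
      simp only [Pi.sub_apply, sub_eq_zero] at h0
      rw [h0, hδdef]
      by_cases h : i₀ = ⟨ℓ, hℓ⟩ <;> simp [h]
    · -- ℓ ∉ I : exchange argument
      have hi₁ : (i₀ : Fin m) ∈ I := i₀.2
      set J : Finset (Fin m) := insert ℓ (I.erase i₀) with hJdef
      have hℓJ : ℓ ∈ J := Finset.mem_insert_self _ _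
      have hk1 : 1 ≤ k := hI ▸ Finset.card_pos.mpr ⟨i₀, hi₁⟩
      have hcard : J.card = k := by
        rw [hJdef, Finset.card_insert_of_notMem
          (fun h => hℓ (Finset.mem_of_mem_erase h)), Finset.card_erase_of_mem hi₁, hI]
        omega
      have hJI : ∀ x : Fin m, x ∈ I → x ≠ (i₀ : Fin m) → x ∈ J :=
        fun x hx hne => Finset.mem_insert_of_mem (Finset.mem_erase.2 ⟨hne, hx⟩)
      have hJmem : ∀ y : Fin m, y ∈ J → y ≠ ℓ → y ∈ I :=
        fun y hy hne => Finset.mem_of_mem_erase (Finset.mem_of_mem_insert_of_ne hy hne)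
      let e : ↥I ≃ ↥J :=
        { toFun := fun x => if h : (x : Fin m) = (i₀ : Fin m) then ⟨ℓ, hℓJ⟩
            else ⟨x, hJI x x.2 h⟩
          invFun := fun y => if h : (y : Fin m) = ℓ then i₀ else ⟨y, hJmem y y.2 h⟩
          left_inv := by
            intro x
            by_cases h : (x : Fin m) = (i₀ : Fin m)
            · have hne : (ℓ : Fin m) = ℓ := rfl
              simp only [h, dif_pos, hne]
              exact Subtype.ext h.symm
            · have hxℓ : (x : Fin m) ≠ ℓ := fun hc => hℓ (hc ▸ x.2)
              simp only [dif_neg h, dif_neg hxℓ]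
          right_inv := by
            intro y
            by_cases h : (y : Fin m) = ℓ
            · simp only [dif_pos h, dif_pos rfl]
              exact Subtype.ext h.symm
            · have hy : (y : Fin m) ≠ (i₀ : Fin m) :=
                Finset.ne_of_mem_erase (Finset.mem_of_mem_insert_of_ne y.2 h)
              simp only [dif_neg h, dif_neg hy] }
      set v : ↥I → Fin N → ℝ := fun i => w i with hvdef
      set v' : ↥I → Fin N → ℝ := Function.update v i₀ (∑ j, lam j • v j) with hv'def
      have h2 : ∀ x : ↥I, w ((e x : ↥J) : Fin m) = v' x := by
        intro x
        by_cases h : x = i₀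
        · subst h
          have : (e x : ↥J) = ⟨ℓ, hℓJ⟩ := by simp [e]
          rw [this, hv'def, Function.update_self]
          simpa [hvdef] using hsum
        · have hne : (x : Fin m) ≠ (i₀ : Fin m) := fun hc => h (Subtype.ext hc)
          have : (e x : ↥J) = ⟨x, hJI x x.2 hne⟩ := by simp [e, hne, h]
          rw [this, hv'def, Function.update_of_ne h]
      have h3 : (Matrix.of fun i j : ↥J => w i ⬝ᵥ w j).submatrix e e
          = Matrix.of fun a b : ↥I => v' a ⬝ᵥ v' b := by
        ext a b
        simp [Matrix.submatrix_apply, h2 a, h2 b]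
      have key : (Matrix.of fun i j : ↥J => w i ⬝ᵥ w j).det
          = (lam i₀)^2 * (Matrix.of fun i j : ↥I => w i ⬝ᵥ w j).det := by
        rw [← Matrix.det_submatrix_equiv_self e, h3, hv'def, gram_det_update v i₀ lam]
      have hmaxJ := hmax J hcard
      rw [key, Real.sqrt_mul (sq_nonneg _), Real.sqrt_sq_eq_abs] at hmaxJ
      exact (mul_le_iff_le_one_left hpos).mp hmaxJ
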